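/- Conversely, if a filter h = (h(0),...,h(K)) with h(0) = 1 satisfies Σ_{i=0}^{K} h(i) f̂(l - i) = 0 for all l ∈ ℤ, where f̂(λ) = Σ_{k=0}^{K-1} a_k u_k^λ with distinct u_k on the unit circle and all a_k ≠ 0, then each u_k is a root of the polynomial H(z) = Σ_{i=0}^{K} h(i) z^{K-i}. -/

import Mathlib

open Complex

/-- Converse: any annihilating filter with h(0)=1 has every u_k as a root of
its polynomial H(z) = Σ h(i) z^{K-i}. -/
theorem stmt2 (K : ℕ) (hK : 1 ≤ K)
    (u : Fin K → ℂ) (hmod : ∀ k, ‖u k‖ = 1) (hdist : Function.Injective u)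
    (a : Fin K → ℂ) (ha : ∀ k, a k ≠ 0)
    (h : ℕ → ℂ) (h0 : h 0 = 1)
    (hann : ∀ l : ℤ,
      ∑ i ∈ Finset.range (K + 1), h i * (∑ k, a k * u k ^ (l - (i : ℤ))) = 0) :
    ∀ k, ∑ i ∈ Finset.range (K + 1), h i * u k ^ ((K : ℤ) - (i : ℤ)) = 0 := by
  have hu0 : ∀ k, u k ≠ 0 := by
    intro k hk
    have := hmod k
    rw [hk] at this
    simp at this
  set c : Fin K → ℂ := fun k => ∑ i ∈ Finset.range (K + 1), h i * (u k) ^ (-(i : ℤ)) with hc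
  have key : ∀ l : ℤ, ∑ k, (a k * c k) * u k ^ l = 0 := by
    intro l
    have H := hann l
    simp_rw [Finset.mul_sum] at H
    rw [Finset.sum_comm] at H
    rw [← H]
    refine Finset.sum_congr rfl fun k _ => ?_
    rw [hc]
    simp only [Finset.sum_mul, Finset.mul_sum]
    refine Finset.sum_congr rfl fun i _ => ?_
    rw [zpow_sub₀ (hu0 k), zpow_neg]
    field_simp
  -- Vandermonde step: c k = 0 for all k
  have hczero : ∀ k, c k = 0 := by
    set M : Matrix (Fin K) (Fin K) ℂ := (Matrix.vandermonde u).transpose with hM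
    have hdet : M.det ≠ 0 := by
      rw [hM, Matrix.det_transpose, Matrix.det_vandermonde]
      apply Finset.prod_ne_zero_iff.2
      intro i _
      apply Finset.prod_ne_zero_iff.2
      intro j hj
      have hij : i ≠ j := (Finset.mem_Ioi.1 hj).ne
      exact sub_ne_zero.2 fun e => hij (hdist e).symm
    have hmv : M.mulVec (fun k => a k * c k) = 0 := by
      funext n
      have := key (n : ℕ)
      simp only [Matrix.mulVec, dotProduct, hM, Matrix.transpose_apply,
        Matrix.vandermonde_apply, Pi.zero_apply]
      rw [← this]
      refine Finset.sum_congr rfl fun k _ => ?_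
      rw [zpow_natCast]
      ring
    have hinj : Function.Injective M.mulVec :=
      Matrix.mulVec_injective_iff_isUnit.2 ((Matrix.isUnit_iff_isUnit_det M).2 (isUnit_iff_ne_zero.2 hdet))
    have : (fun k => a k * c k) = 0 := by
      apply hinj
      rw [hmv, Matrix.mulVec_zero]
    intro k
    have hk := congrFun this k
    simp only [Pi.zero_apply] at hk
    exact (mul_eq_zero.1 hk).resolve_left (ha k)
  intro k
  have : ∑ i ∈ Finset.range (K + 1), h i * u k ^ ((K : ℤ) - (i : ℤ))
      = u k ^ (K : ℤ) * c k := by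
    rw [hc, Finset.mul_sum]
    refine Finset.sum_congr rfl fun i _ => ?_
    rw [zpow_sub₀ (hu0 k), zpow_neg]
    field_simp
  rw [this, hczero k, mul_zero]
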